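/- The γ-relation of the λ^p-calculus is Church-Rosser: for λ^p-terms M, R, S, if M ↠_γ R and M ↠_γ S, then there exists a λ^p-term T such that R ↠_γ T and S ↠_γ T. -/

import Mathlib

/-- λ^p-terms: M ::= x | M₁ M₂ | λx.M | (M₁, M₂) over a countably infinite
set of variables. -/
inductive PTerm : Type
  | var : ℕ → PTerm
  | app : PTerm → PTerm → PTerm
  | lam : ℕ → PTerm → PTerm
  | coll : PTerm → PTerm → PTerm

/-- The congruence on λ^p-terms generated by (ClnOrd) M,N ≡ N,M and
(ClnNest) (M,N),P ≡ M,(N,P): the smallest equivalence relation compatible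
with all term constructors containing the two axioms. -/
inductive Cong : PTerm → PTerm → Prop
  | refl (M : PTerm) : Cong M M
  | symm {M N : PTerm} : Cong M N → Cong N M
  | trans {M N P : PTerm} : Cong M N → Cong N P → Cong M P
  | app {M M' N N' : PTerm} : Cong M M' → Cong N N' → Cong (.app M N) (.app M' N')
  | lam (x : ℕ) {M M' : PTerm} : Cong M M' → Cong (.lam x M) (.lam x M')
  | coll {M M' N N' : PTerm} : Cong M M' → Cong N N' → Cong (.coll M N) (.coll M' N')
  | ord (M N : PTerm) : Cong (.coll M N) (.coll N M)
  | nest (M N P : PTerm) : Cong (.coll (.coll M N) P) (.coll M (.coll N P))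

/-- `collOf M [N₁,…,Nₖ]` is the right-associated collection `(M, N₁, …, Nₖ)`. -/
def collOf : PTerm → List PTerm → PTerm
  | M, [] => M
  | M, N :: L => .coll M (collOf N L)

/-- A term is a collection if its outermost constructor is the comma. -/
def IsColl : PTerm → Prop
  | .coll _ _ => True
  | _ => False

/-- The γ-relation of the λ^p-calculus: it relates each application P Q, where
P is congruent to a collection (M₀,…,M_m) and Q to a collection (N₀,…,N_n)
with at least one of them a proper (more-than-one-element) collection, to the
collection of all applications M_i N_j. -/
inductive Gamma : PTerm → PTerm → Prop
  | mk (P Q M N : PTerm) (Ms Ns : List PTerm)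
      (hP : Cong P (collOf M Ms)) (hQ : Cong Q (collOf N Ns))
      (hn : Ms ≠ [] ∨ Ns ≠ []) :
      Gamma (.app P Q)
        (collOf (.app M N)
          (Ns.map (.app M) ++ Ms.flatMap fun Mi => (N :: Ns).map (.app Mi)))

/-- One-step γ-reduction: the compatible closure (closure under all term
constructors) of the γ-relation. -/
inductive StepG : PTerm → PTerm → Prop
  | gamma {M N : PTerm} : Gamma M N → StepG M N
  | appL {M M' N : PTerm} : StepG M M' → StepG (.app M N) (.app M' N)
  | appR {M N N' : PTerm} : StepG N N' → StepG (.app M N) (.app M N')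
  | lam (x : ℕ) {M M' : PTerm} : StepG M M' → StepG (.lam x M) (.lam x M')
  | collL {M M' N : PTerm} : StepG M M' → StepG (.coll M N) (.coll M' N)
  | collR {M N N' : PTerm} : StepG N N' → StepG (.coll M N) (.coll M N')

/-- γ-reduction ↠_γ : the reflexive-transitive closure of one-step
γ-reduction, on terms considered up to the congruence generated by
(ClnOrd) and (ClnNest). -/
def RedG : PTerm → PTerm → Prop :=
  Relation.ReflTransGen (fun M N => StepG M N ∨ Cong M N)

/-! ### Auxiliary development: a canonical γ-normal form -/

namespace CRAux

/-- An injective encoding of terms into ℕ, used to sort collections. -/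
def enc : PTerm → ℕ
  | .var n => Nat.pair 0 n
  | .app a b => Nat.pair 1 (Nat.pair (enc a) (enc b))
  | .lam x m => Nat.pair 2 (Nat.pair x (enc m))
  | .coll a b => Nat.pair 3 (Nat.pair (enc a) (enc b))

lemma enc_inj : ∀ a b : PTerm, enc a = enc b → a = b := by
  intro a
  induction a with
  | var n =>
      intro b h; cases b <;> simp [enc, Nat.pair_eq_pair] at h
      rw [h]
  | app x y ihx ihy =>
      intro b h; cases b <;> simp [enc, Nat.pair_eq_pair] at h
      rw [ihx _ h.1, ihy _ h.2]
  | lam x m ihm =>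
      intro b h; cases b <;> simp [enc, Nat.pair_eq_pair] at h
      rw [h.1, ihm _ h.2]
  | coll x y ihx ihy =>
      intro b h; cases b <;> simp [enc, Nat.pair_eq_pair] at h
      rw [ihx _ h.1, ihy _ h.2]

/-- Boolean comparison on terms. -/
def tle (a b : PTerm) : Bool := decide (enc a ≤ enc b)

/-- Canonical sorting of a list of terms. -/
def sortT (l : List PTerm) : List PTerm := l.mergeSort tle

lemma sortT_perm (l : List PTerm) : (sortT l).Perm l := List.mergeSort_perm l tle

lemma sortT_sorted (l : List PTerm) :
    (sortT l).Pairwise (fun a b => tle a b = true) :=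
  List.pairwise_mergeSort
    (by intro a b c; simp only [tle, decide_eq_true_eq]; omega)
    (by intro a b; simp only [tle, Bool.or_eq_true, decide_eq_true_eq]; omega) l

lemma sortT_eq_of_perm {l l' : List PTerm} (h : l.Perm l') : sortT l = sortT l' := by
  have : IsAntisymm PTerm (fun a b => tle a b = true) :=
    ⟨by
      intro a b ha hb
      simp only [tle, decide_eq_true_eq] at ha hb
      exact enc_inj _ _ (le_antisymm ha hb)⟩
  exact List.Perm.eq_of_pairwise'
    (sortT_sorted l) (sortT_sorted l')
    ((sortT_perm l).trans (h.trans (sortT_perm l').symm))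

lemma sortT_idem (l : List PTerm) : sortT (sortT l) = sortT l :=
  List.mergeSort_of_pairwise (sortT_sorted l)

lemma sortT_singleton (x : PTerm) : sortT [x] = [x] :=
  List.mergeSort_of_pairwise (by simp)

/-- Build a collection out of a nonempty list (right-nested). -/
def F : List PTerm → PTerm
  | [] => .var 0
  | a :: l => collOf a l

/-- Canonical collection on a list: sort, then right-nest. -/
def canon (l : List PTerm) : PTerm := F (sortT l)

/-- The flattened components of a term, where collections are flattened. -/
def comps : PTerm → List PTerm
  | .var n => [.var n]
  | .app a b => [.app a b]
  | .lam x m => [.lam x m]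
  | .coll a b => comps a ++ comps b

/-- Non-collection terms. -/
def NC (t : PTerm) : Prop := ∀ a b, t ≠ PTerm.coll a b

lemma comps_ne_nil : ∀ t : PTerm, comps t ≠ [] := by
  intro t
  induction t with
  | var n => simp [comps]
  | app a b _ _ => simp [comps]
  | lam x m _ => simp [comps]
  | coll a b iha ihb =>
      rw [comps]
      intro h
      exact iha (List.append_eq_nil_iff.mp h).1

lemma comps_of_nc {t : PTerm} (h : NC t) : comps t = [t] := by
  cases t with
  | coll a b => exact absurd rfl (h a b)
  | var n => rfl
  | app a b => rfl
  | lam x m => rfl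

lemma F_cons (a b : PTerm) (l : List PTerm) : F (a :: b :: l) = .coll a (F (b :: l)) := rfl

lemma comps_F {l : List PTerm} (hnc : ∀ x ∈ l, NC x) (hne : l ≠ []) :
    comps (F l) = l := by
  induction l with
  | nil => exact absurd rfl hne
  | cons a l ih =>
      cases l with
      | nil => exact comps_of_nc (hnc a (by simp))
      | cons b l' =>
          rw [F_cons, comps, comps_of_nc (hnc a (by simp)),
            ih (fun x hx => hnc x (by simp [hx])) (by simp)]
          rfl

lemma comps_canon {l : List PTerm} (hnc : ∀ x ∈ l, NC x) (hne : l ≠ []) :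
    comps (canon l) = sortT l := by
  refine comps_F (fun x hx => hnc x ((sortT_perm l).mem_iff.mp hx)) ?_
  intro h
  have p := (sortT_perm l).symm
  rw [h] at p
  exact hne p.eq_nil

/-- list of all pairwise applications -/
def apps (A B : List PTerm) : List PTerm := A.flatMap fun a => B.map (.app a)

lemma apps_ne_nil {A B : List PTerm} (hA : A ≠ []) (hB : B ≠ []) : apps A B ≠ [] := by
  cases A with
  | nil => exact absurd rfl hA
  | cons a A =>
      cases B with
      | nil => exact absurd rfl hB
      | cons b B => simp [apps]

lemma apps_nc {A B : List PTerm} : ∀ x ∈ apps A B, NC x := by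
  intro x hx
  simp only [apps, List.mem_flatMap, List.mem_map] at hx
  obtain ⟨a, _, b, _, rfl⟩ := hx
  intro u v h
  exact PTerm.noConfusion h

/-- The γ-normal form with canonically ordered collections. -/
def norm : PTerm → PTerm
  | .var n => .var n
  | .app a b => canon (apps (comps (norm a)) (comps (norm b)))
  | .lam x m => .lam x (norm m)
  | .coll a b => canon (comps (norm a) ++ comps (norm b))

lemma nc_comps_norm : ∀ M : PTerm, ∀ x ∈ comps (norm M), NC x := by
  intro M
  induction M with
  | var n =>
      intro x hx
      simp only [norm, comps, List.mem_singleton] at hx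
      subst hx; intro a b h; exact PTerm.noConfusion h
  | app a b iha ihb =>
      intro x hx
      rw [norm, comps_canon apps_nc
        (apps_ne_nil (comps_ne_nil _) (comps_ne_nil _))] at hx
      exact apps_nc x ((sortT_perm _).mem_iff.mp hx)
  | lam y m ihm =>
      intro x hx
      simp only [norm, comps, List.mem_singleton] at hx
      subst hx; intro a b h; exact PTerm.noConfusion h
  | coll a b iha ihb =>
      intro x hx
      have hnc : ∀ y ∈ comps (norm a) ++ comps (norm b), NC y := by
        intro y hy
        rcases List.mem_append.mp hy with h | h
        · exact iha y h
        · exact ihb y h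
      rw [norm, comps_canon hnc (by simp [comps_ne_nil])] at hx
      exact hnc x ((sortT_perm _).mem_iff.mp hx)

lemma norm_eq_F_comps (M : PTerm) : norm M = F (comps (norm M)) := by
  cases M with
  | var n => rfl
  | lam x m => rfl
  | app a b =>
      rw [norm, comps_canon apps_nc (apps_ne_nil (comps_ne_nil _) (comps_ne_nil _))]
      rfl
  | coll a b =>
      have hnc : ∀ y ∈ comps (norm a) ++ comps (norm b), NC y := by
        intro y hy
        rcases List.mem_append.mp hy with h | h
        · exact nc_comps_norm a y h
        · exact nc_comps_norm b y h
      rw [norm, comps_canon hnc (by simp [comps_ne_nil])]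
      rfl

lemma canon_eq_of_perm {l l' : List PTerm} (h : l.Perm l') : canon l = canon l' := by
  unfold canon; rw [sortT_eq_of_perm h]

lemma norm_eq_canon_comps (M : PTerm) : norm M = canon (comps (norm M)) := by
  cases M with
  | var n => simp [norm, comps, canon, sortT_singleton]; rfl
  | lam x m => simp [norm, comps, canon, sortT_singleton]; rfl
  | app a b =>
      rw [norm, comps_canon apps_nc (apps_ne_nil (comps_ne_nil _) (comps_ne_nil _))]
      unfold canon
      rw [sortT_idem]
  | coll a b =>
      have hnc : ∀ y ∈ comps (norm a) ++ comps (norm b), NC y := by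
        intro y hy
        rcases List.mem_append.mp hy with h | h
        · exact nc_comps_norm a y h
        · exact nc_comps_norm b y h
      rw [norm, comps_canon hnc (by simp [comps_ne_nil])]
      unfold canon
      rw [sortT_idem]

/-! ### Congruence lemmas -/

lemma cong_F_perm : ∀ {l l' : List PTerm}, l.Perm l' → Cong (F l) (F l') := by
  intro l l' h
  induction h with
  | nil => exact Cong.refl _
  | cons x p ih =>
      rename_i l₁ l₂
      cases l₁ with
      | nil =>
          rw [p.symm.eq_nil]
          exact Cong.refl _
      | cons a t =>
          cases l₂ with
          | nil => exact absurd p.eq_nil (by simp)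
          | cons b t' =>
              rw [F_cons, F_cons]
              exact Cong.coll (Cong.refl x) ih
  | swap x y l =>
      cases l with
      | nil => exact Cong.ord y x
      | cons a t =>
          rw [F_cons, F_cons, F_cons, F_cons]
          exact Cong.trans (Cong.symm (Cong.nest y x (F (a :: t))))
            (Cong.trans (Cong.coll (Cong.ord y x) (Cong.refl _))
              (Cong.nest x y (F (a :: t))))
  | trans _ _ ih₁ ih₂ => exact Cong.trans ih₁ ih₂

lemma cong_coll_F_append : ∀ (l l' : List PTerm), l ≠ [] → l' ≠ [] →
    Cong (.coll (F l) (F l')) (F (l ++ l')) := by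
  intro l
  induction l with
  | nil => intro l' h; exact absurd rfl h
  | cons a t ih =>
      intro l' _ hl'
      cases t with
      | nil =>
          cases l' with
          | nil => exact absurd rfl hl'
          | cons b t' => exact Cong.refl _
      | cons b t'' =>
          cases l' with
          | nil => exact absurd rfl hl'
          | cons c t' =>
              rw [F_cons]
              refine Cong.trans (Cong.nest a (F (b :: t'')) (F (c :: t'))) ?_
              have : F (a :: (b :: t'' ++ c :: t')) =
                  .coll a (F (b :: t'' ++ c :: t')) := rfl
              rw [List.cons_append, this]
              exact Cong.coll (Cong.refl a) (ih (c :: t') (by simp) hl')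

lemma cong_F_comps (T : PTerm) : Cong T (F (comps T)) := by
  induction T with
  | var n => exact Cong.refl _
  | app a b _ _ => exact Cong.refl _
  | lam x m _ => exact Cong.refl _
  | coll a b iha ihb =>
      refine Cong.trans (Cong.coll iha ihb) ?_
      exact cong_coll_F_append _ _ (comps_ne_nil a) (comps_ne_nil b)

lemma cong_of_comps_perm {T T' : PTerm} (h : (comps T).Perm (comps T')) :
    Cong T T' :=
  Cong.trans (cong_F_comps T) (Cong.trans (cong_F_perm h) (Cong.symm (cong_F_comps T')))

lemma cong_F_canon {l : List PTerm} (hnc : ∀ x ∈ l, NC x) (hne : l ≠ []) :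
    Cong (F l) (canon l) := by
  refine cong_of_comps_perm ?_
  rw [comps_F hnc hne, comps_canon hnc hne]
  exact (sortT_perm l).symm

/-! ### Permutation lemmas for `apps` -/

lemma apps_append_left (A₁ A₂ B : List PTerm) :
    apps (A₁ ++ A₂) B = apps A₁ B ++ apps A₂ B :=
  List.flatMap_append

lemma perm_middle_swap (w x y z : List PTerm) :
    (w ++ x ++ (y ++ z)).Perm (w ++ y ++ (x ++ z)) := by
  have h1 : (x ++ (y ++ z)).Perm (y ++ (x ++ z)) := by
    rw [← List.append_assoc, ← List.append_assoc]
    exact List.Perm.append_right z List.perm_append_comm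
  rw [List.append_assoc, List.append_assoc]
  exact List.Perm.append_left w h1

lemma apps_append_right (A B₁ B₂ : List PTerm) :
    (apps A (B₁ ++ B₂)).Perm (apps A B₁ ++ apps A B₂) := by
  induction A with
  | nil => simp [apps]
  | cons a A ih =>
      simp only [apps, List.flatMap_cons, List.map_append] at *
      exact (List.Perm.append_left _ ih).trans (perm_middle_swap _ _ _ _)

lemma apps_perm_left {A A' : List PTerm} (B : List PTerm) (h : A.Perm A') :
    (apps A B).Perm (apps A' B) :=
  List.Perm.flatMap_right _ h

lemma apps_perm_right (A : List PTerm) {B B' : List PTerm} (h : B.Perm B') :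
    (apps A B).Perm (apps A B') :=
  List.Perm.flatMap_left _ (fun a _ => h.map _)

lemma apps_flatMap_left (l : List PTerm) (g : PTerm → List PTerm) (B : List PTerm) :
    apps (l.flatMap g) B = l.flatMap fun x => apps (g x) B := by
  induction l with
  | nil => rfl
  | cons a l ih => rw [List.flatMap_cons, apps_append_left, ih, List.flatMap_cons]

lemma apps_flatMap_right (A : List PTerm) (l : List PTerm) (g : PTerm → List PTerm) :
    (apps A (l.flatMap g)).Perm (l.flatMap fun y => apps A (g y)) := by
  induction l with
  | nil => simp [apps]
  | cons a l ih =>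
      rw [List.flatMap_cons, List.flatMap_cons]
      exact (apps_append_right A _ _).trans (List.Perm.append_left _ ih)

/-! ### Invariance of `norm` -/

lemma norm_cong {M N : PTerm} (h : Cong M N) : norm M = norm N := by
  induction h with
  | refl M => rfl
  | symm _ ih => exact ih.symm
  | trans _ _ ih₁ ih₂ => exact ih₁.trans ih₂
  | app _ _ ih₁ ih₂ => rw [norm, norm, ih₁, ih₂]
  | lam x _ ih => rw [norm, norm, ih]
  | coll _ _ ih₁ ih₂ => rw [norm, norm, ih₁, ih₂]
  | ord M N => exact canon_eq_of_perm List.perm_append_comm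
  | nest M N P =>
      have hMN : ∀ y ∈ comps (norm M) ++ comps (norm N), NC y := by
        intro y hy
        rcases List.mem_append.mp hy with h | h
        · exact nc_comps_norm M y h
        · exact nc_comps_norm N y h
      have hNP : ∀ y ∈ comps (norm N) ++ comps (norm P), NC y := by
        intro y hy
        rcases List.mem_append.mp hy with h | h
        · exact nc_comps_norm N y h
        · exact nc_comps_norm P y h
      show norm (.coll (.coll M N) P) = norm (.coll M (.coll N P))
      rw [norm, norm]
      show canon (comps (norm (.coll M N)) ++ comps (norm P)) =
        canon (comps (norm M) ++ comps (norm (.coll N P)))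
      rw [norm, norm, comps_canon hMN (by simp [comps_ne_nil]),
        comps_canon hNP (by simp [comps_ne_nil])]
      refine canon_eq_of_perm ?_
      refine (List.Perm.append_right _ (sortT_perm _)).trans ?_
      rw [List.append_assoc]
      exact List.Perm.append_left _ (sortT_perm _).symm

lemma comps_norm_collOf (A : PTerm) (L : List PTerm) :
    (comps (norm (collOf A L))).Perm ((A :: L).flatMap fun x => comps (norm x)) := by
  induction L generalizing A with
  | nil => simp [collOf]
  | cons B L ih =>
      have hnc : ∀ y ∈ comps (norm A) ++ comps (norm (collOf B L)), NC y := by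
        intro y hy
        rcases List.mem_append.mp hy with h | h
        · exact nc_comps_norm A y h
        · exact nc_comps_norm _ y h
      rw [collOf, norm, comps_canon hnc (by simp [comps_ne_nil])]
      refine (sortT_perm _).trans ?_
      rw [List.flatMap_cons]
      exact List.Perm.append_left _ (ih B)

lemma norm_step {M N : PTerm} (h : StepG M N) : norm M = norm N := by
  induction h with
  | appL _ ih => rw [norm, norm, ih]
  | appR _ ih => rw [norm, norm, ih]
  | lam x _ ih => rw [norm, norm, ih]
  | collL _ ih => rw [norm, norm, ih]
  | collR _ ih => rw [norm, norm, ih]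
  | gamma hg =>
      cases hg with
      | mk P Q M N Ms Ns hP hQ hn =>
          have hlist : (PTerm.app M N ::
              (Ns.map (.app M) ++ Ms.flatMap fun Mi => (N :: Ns).map (.app Mi))) =
              (M :: Ms).flatMap fun Mi => (N :: Ns).map (.app Mi) := by
            simp [List.flatMap_cons]
          have hPc : (comps (norm P)).Perm ((M :: Ms).flatMap fun x => comps (norm x)) := by
            rw [norm_cong hP]; exact comps_norm_collOf M Ms
          have hQc : (comps (norm Q)).Perm ((N :: Ns).flatMap fun x => comps (norm x)) := by
            rw [norm_cong hQ]; exact comps_norm_collOf N Ns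
          have e2 := norm_eq_canon_comps (collOf (PTerm.app M N)
            (Ns.map (.app M) ++ Ms.flatMap fun Mi => (N :: Ns).map (.app Mi)))
          show norm (PTerm.app P Q) = _
          rw [norm, e2]
          refine canon_eq_of_perm ?_
          have h1 : (apps (comps (norm P)) (comps (norm Q))).Perm
              ((M :: Ms).flatMap fun x => (N :: Ns).flatMap fun y =>
                apps (comps (norm x)) (comps (norm y))) := by
            refine ((apps_perm_left _ hPc).trans (apps_perm_right _ hQc)).trans ?_
            rw [apps_flatMap_left]
            exact List.Perm.flatMap_left _ (fun x _ => apps_flatMap_right _ _ _)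
          have h2 : (comps (norm (collOf (PTerm.app M N)
              (Ns.map (.app M) ++ Ms.flatMap fun Mi => (N :: Ns).map (.app Mi))))).Perm
              ((M :: Ms).flatMap fun x => (N :: Ns).flatMap fun y =>
                apps (comps (norm x)) (comps (norm y))) := by
            refine (comps_norm_collOf _ _).trans ?_
            rw [hlist, List.flatMap_assoc]
            refine List.Perm.flatMap_left _ (fun x _ => ?_)
            rw [List.flatMap_map]
            refine List.Perm.flatMap_left _ (fun y _ => ?_)
            show (comps (norm (PTerm.app x y))).Perm _
            rw [norm, comps_canon apps_nc (apps_ne_nil (comps_ne_nil _) (comps_ne_nil _))]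
            exact sortT_perm _
          exact h1.trans h2.symm

/-! ### Reduction lemmas -/

lemma redg_of_step {M N : PTerm} (h : StepG M N) : RedG M N :=
  Relation.ReflTransGen.single (Or.inl h)

lemma redg_of_cong {M N : PTerm} (h : Cong M N) : RedG M N :=
  Relation.ReflTransGen.single (Or.inr h)

lemma redg_appL {M M' N : PTerm} (h : RedG M M') : RedG (.app M N) (.app M' N) :=
  Relation.ReflTransGen.lift (fun x => PTerm.app x N)
    (fun _ _ hab => hab.elim (fun s => Or.inl (StepG.appL s))
      (fun c => Or.inr (Cong.app c (Cong.refl N)))) _ _ h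

lemma redg_appR {M N N' : PTerm} (h : RedG N N') : RedG (.app M N) (.app M N') :=
  Relation.ReflTransGen.lift (fun x => PTerm.app M x)
    (fun _ _ hab => hab.elim (fun s => Or.inl (StepG.appR s))
      (fun c => Or.inr (Cong.app (Cong.refl M) c))) _ _ h

lemma redg_lam (x : ℕ) {M M' : PTerm} (h : RedG M M') : RedG (.lam x M) (.lam x M') :=
  Relation.ReflTransGen.lift (fun t => PTerm.lam x t)
    (fun _ _ hab => hab.elim (fun s => Or.inl (StepG.lam x s))
      (fun c => Or.inr (Cong.lam x c))) _ _ h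

lemma redg_collL {M M' N : PTerm} (h : RedG M M') : RedG (.coll M N) (.coll M' N) :=
  Relation.ReflTransGen.lift (fun t => PTerm.coll t N)
    (fun _ _ hab => hab.elim (fun s => Or.inl (StepG.collL s))
      (fun c => Or.inr (Cong.coll c (Cong.refl N)))) _ _ h

lemma redg_collR {M N N' : PTerm} (h : RedG N N') : RedG (.coll M N) (.coll M N') :=
  Relation.ReflTransGen.lift (fun t => PTerm.coll M t)
    (fun _ _ hab => hab.elim (fun s => Or.inl (StepG.collR s))
      (fun c => Or.inr (Cong.coll (Cong.refl M) c))) _ _ h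

lemma redg_norm : ∀ M : PTerm, RedG M (norm M) := by
  intro M
  induction M with
  | var n => exact Relation.ReflTransGen.refl
  | lam x m ihm => exact redg_lam x ihm
  | coll a b iha ihb =>
      refine ((redg_collL iha).trans (redg_collR ihb)).trans (redg_of_cong ?_)
      have hnc : ∀ y ∈ comps (norm a) ++ comps (norm b), NC y := by
        intro y hy
        rcases List.mem_append.mp hy with h | h
        · exact nc_comps_norm a y h
        · exact nc_comps_norm b y h
      refine cong_of_comps_perm ?_
      show (comps (norm a) ++ comps (norm b)).Perm (comps (norm (PTerm.coll a b)))
      rw [norm, comps_canon hnc (by simp [comps_ne_nil])]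
      exact (sortT_perm _).symm
  | app a b iha ihb =>
      refine ((redg_appL iha).trans (redg_appR ihb)).trans ?_
      rcases hcp : comps (norm a) with _ | ⟨p, ps⟩
      · exact absurd hcp (comps_ne_nil _)
      rcases hcq : comps (norm b) with _ | ⟨q, qs⟩
      · exact absurd hcq (comps_ne_nil _)
      by_cases hps : ps = [] ∧ qs = []
      · obtain ⟨h1, h2⟩ := hps
        subst h1; subst h2
        have ha : norm a = p := by rw [norm_eq_F_comps a, hcp]; rfl
        have hb : norm b = q := by rw [norm_eq_F_comps b, hcq]; rfl
        have hcalc : norm (PTerm.app a b) = PTerm.app p q := by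
          rw [norm, hcp, hcq]
          show canon [PTerm.app p q] = _
          unfold canon
          rw [sortT_singleton]
          rfl
        rw [hcalc, ha, hb]
      · have hn : ps ≠ [] ∨ qs ≠ [] := by tauto
        have hP : Cong (norm a) (collOf p ps) := by
          rw [norm_eq_F_comps a, hcp]; exact Cong.refl _
        have hQ : Cong (norm b) (collOf q qs) := by
          rw [norm_eq_F_comps b, hcq]; exact Cong.refl _
        refine (redg_of_step (StepG.gamma (Gamma.mk _ _ p q ps qs hP hQ hn))).trans
          (redg_of_cong ?_)
        have hF : collOf (PTerm.app p q)
            (qs.map (.app p) ++ ps.flatMap fun Mi => (q :: qs).map (.app Mi)) =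
            F (apps (p :: ps) (q :: qs)) := rfl
        rw [hF]
        have : norm (PTerm.app a b) = canon (apps (p :: ps) (q :: qs)) := by
          rw [norm, hcp, hcq]
        rw [this]
        exact cong_F_canon apps_nc (apps_ne_nil (by simp) (by simp))

lemma norm_redg {M N : PTerm} (h : RedG M N) : norm M = norm N := by
  induction h with
  | refl => rfl
  | tail _ hstep ih => exact ih.trans (hstep.elim norm_step norm_cong)

end CRAux

/-- The γ-relation of the λ^p-calculus is Church-Rosser: if M ↠_γ R and
M ↠_γ S then there exists a λ^p-term T with R ↠_γ T and S ↠_γ T. -/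
theorem gamma_church_rosser (M R S : PTerm) (hR : RedG M R) (hS : RedG M S) :
    ∃ T : PTerm, RedG R T ∧ RedG S T := by
  refine ⟨CRAux.norm M, ?_, ?_⟩
  · rw [CRAux.norm_redg hR]; exact CRAux.redg_norm R
  · rw [CRAux.norm_redg hS]; exact CRAux.redg_norm S
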